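/- Let Ω = ℝ, φ ∈ { x ↦ x², x ↦ exp(−x) }, P = (1−p)δ_{−1} + p·δ_1 with 0 < p ≤ 1/2, k = 2, and h ∈ (1−p, 1). Then B_h = ((h+p−1)/p) ∧ (1−h). Moreover, letting Q_{γ,N} = (1−γ)P + γδ_N: (i) if (1+p)h > 1, then B_h = 1−h, and for every γ > 1−h, any sequence of optimal 2-point h-trimmed codebooks c*_2(Q_{γ,N}) for Q_{γ,N} satisfies ‖c*_2(Q_{γ,N})‖ → +∞ as N → +∞; (ii) if (1+p)h ≤ 1, then B_h = (h+p−1)/p, and for γ = B_h, the codebook (−1, N) is an optimal 2-point h-trimmed codebook for Q_{γ,N}. -/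

import Mathlib

open MeasureTheory ENNReal Filter Topology
open scoped RealInnerProductSpace BigOperators

noncomputable section

variable {E : Type*} [NormedAddCommGroup E] [InnerProductSpace ℝ E] [CompleteSpace E]
  [MeasurableSpace E] [BorelSpace E]

/-- Bregman divergence `d_φ(x,y) = φ x − φ y − ⟪∇φ(y), x − y⟫`. -/
def breg (φ : E → ℝ) (x y : E) : ℝ :=
  φ x - φ y - ⟪gradient φ y, x - y⟫

/-- Bregman divergence from a point to a codebook: `min_j d_φ(x, c_j)`. -/
def bregCode {k : ℕ} (φ : E → ℝ) (x : E) (c : Fin k → E) : ℝ :=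
  ⨅ j, breg φ x (c j)

/-- Open Bregman ball of a codebook. -/
def bBall {k : ℕ} (φ : E → ℝ) (c : Fin k → E) (r : ℝ) : Set E :=
  {x | bregCode φ x c < r ^ 2}

/-- Closed Bregman ball of a codebook. -/
def bBallc {k : ℕ} (φ : E → ℝ) (c : Fin k → E) (r : ℝ) : Set E :=
  {x | bregCode φ x c ≤ r ^ 2}

/-- Bregman sphere of a codebook. -/
def bSphere {k : ℕ} (φ : E → ℝ) (c : Fin k → E) (r : ℝ) : Set E :=
  {x | bregCode φ x c = r ^ 2}

/-- `𝒫_h`: normalized sub-measures of `P` of total mass `h`. -/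
def subProb (P : Measure E) (h : ℝ) : Set (Measure E) :=
  {Pt | ∃ Q : Measure E, Q ≤ P ∧ Q Set.univ = ENNReal.ofReal h ∧
        Pt = (ENNReal.ofReal h)⁻¹ • Q}

/-- Distortion `R(P̃, c) = ∫ d_φ(u, c) dP̃(u)`. -/
def distor {k : ℕ} (φ : E → ℝ) (Pt : Measure E) (c : Fin k → E) : ℝ :=
  ∫ x, bregCode φ x c ∂Pt

/-- The trimming radius `r_h(c)`: smallest `r ≥ 0` with
`P(B_φ(c,r)) ≤ h ≤ P(B̄_φ(c,r))`. -/
def trimRadius {k : ℕ} (P : Measure E) (φ : E → ℝ) (h : ℝ) (c : Fin k → E) : ℝ :=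
  sInf {r : ℝ | 0 ≤ r ∧ P (bBall φ c r) ≤ ENNReal.ofReal h ∧
        ENNReal.ofReal h ≤ P (bBallc φ c r)}

/-- `𝒫_h(c)`: elements of `𝒫_h` coinciding with `P/h` on the open ball
`B_φ(c, r_h(c))` and supported in the closed ball `B̄_φ(c, r_h(c))`. -/
def subProbC {k : ℕ} (P : Measure E) (φ : E → ℝ) (h : ℝ) (c : Fin k → E) :
    Set (Measure E) :=
  {Pt | Pt ∈ subProb P h ∧
    Pt.restrict (bBall φ c (trimRadius P φ h c)) =
      ((ENNReal.ofReal h)⁻¹ • P).restrict (bBall φ c (trimRadius P φ h c)) ∧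
    Pt (bBallc φ c (trimRadius P φ h c))ᶜ = 0}

/-- The `h`-trimmed distortion `R_h(c) = h·R(P̃_c, c)` for any `P̃_c ∈ 𝒫_h(c)`
(the value does not depend on the choice of `P̃_c`). -/
def trimDistor {k : ℕ} (P : Measure E) (φ : E → ℝ) (h : ℝ) (c : Fin k → E) : ℝ :=
  sInf ((fun Pt => h * distor φ Pt c) '' subProbC P φ h c)

/-- Support of a measure. -/
def msupport (P : Measure E) : Set E := {x | ∀ U ∈ nhds x, P U ≠ 0}

/-- `F₀`: closure of the convex hull of the support of `P`. -/
def F0 (P : Measure E) : Set E := closure (convexHull ℝ (msupport P))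

/-- Optimal `j`-point `h`-trimmed distortion `R*_{j,h}`, over codebooks in `Ω`. -/
def optTrim (P : Measure E) (φ : E → ℝ) (Ω : Set E) (h : ℝ) (j : ℕ) : ℝ :=
  sInf {r : ℝ | ∃ c : Fin j → E, (∀ i, c i ∈ Ω) ∧ r = trimDistor P φ h c}

/-- Distance between codebooks up to relabelling. -/
def Dcode {k : ℕ} (c c' : Fin k → E) : ℝ :=
  ⨅ σ : Equiv.Perm (Fin k), ⨆ i, ‖c i - c' (σ i)‖

/-- Empirical measure of a finite sample. -/
def empMeas {n : ℕ} (X : Fin n → E) : Measure E :=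
  (n : ℝ≥0∞)⁻¹ • ∑ i, Measure.dirac (X i)

/-- Bregman–Voronoi cell `V_i(c)`. -/
def vorCell {k : ℕ} (φ : E → ℝ) (c : Fin k → E) (i : Fin k) : Set E :=
  {x | ∀ j, j ≠ i → breg φ x (c i) ≤ breg φ x (c j)}

/-- Discernability factor `B_h` (for `k`-point quantization over `Ω`). -/
def discern (P : Measure E) (φ : E → ℝ) (Ω : Set E) (h : ℝ) (k : ℕ) : ℝ :=
  sSup {b : ℝ | 0 ≤ b ∧ b ≤ min h (1 - h) ∧
    ∀ j, 2 ≤ j → j ≤ k →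
      0 < optTrim P φ Ω ((h - b) / (1 - b)) (j - 1) - optTrim P φ Ω (h / (1 - b)) j}


/-- The corrupted distribution `Q_{γ,N} = (1−γ)P + γ·δ_N`. -/
def Qmix (P : Measure ℝ) (γ N : ℝ) : Measure ℝ :=
  ENNReal.ofReal (1 - γ) • P + ENNReal.ofReal γ • Measure.dirac N

-- Section 1 : breg computations
lemma inner_real (a b : ℝ) : ⟪a, b⟫ = a * b := by simp [RCLike.inner_apply]; ring

lemma breg_eq_deriv (φ : ℝ → ℝ) (x y : ℝ) :
    breg φ x y = φ x - φ y - deriv φ y * (x - y) := by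
  rw [breg, gradient_eq_deriv', inner_real]

lemma breg_sq (x y : ℝ) : breg (fun x => x ^ 2) x y = (x - y) ^ 2 := by
  rw [breg_eq_deriv]
  have : deriv (fun x : ℝ => x ^ 2) y = 2 * y := by
    simp
  rw [this]; ring

lemma breg_exp (x y : ℝ) :
    breg (fun x => Real.exp (-x)) x y
      = Real.exp (-x) - Real.exp (-y) + Real.exp (-y) * (x - y) := by
  rw [breg_eq_deriv]
  have h : HasDerivAt (fun x : ℝ => Real.exp (-x)) (Real.exp (-y) * (-1)) y :=
    (hasDerivAt_neg y).exp
  rw [h.deriv]; ring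

variable {φ : ℝ → ℝ}

lemma breg_nonneg (hφ : φ = (fun x => x ^ 2) ∨ φ = fun x => Real.exp (-x)) (x y : ℝ) :
    0 ≤ breg φ x y := by
  rcases hφ with h | h <;> subst h
  · rw [breg_sq]; positivity
  · rw [breg_exp]
    have h1 : (y - x) + 1 ≤ Real.exp (y - x) := Real.add_one_le_exp _
    have h2 : Real.exp (-x) = Real.exp (-y) * Real.exp (y - x) := by
      rw [← Real.exp_add]; ring_nf
    nlinarith [Real.exp_pos (-y)]

lemma breg_cont (hφ : φ = (fun x => x ^ 2) ∨ φ = fun x => Real.exp (-x)) (y : ℝ) :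
    Continuous fun x => breg φ x y := by
  rcases hφ with h | h <;> subst h
  · simp only [breg_sq]; continuity
  · simp only [breg_exp]; continuity

lemma bregCode_one (x : ℝ) (c : Fin 1 → ℝ) : bregCode φ x c = breg φ x (c 0) := ciInf_unique

lemma bregCode_two (x : ℝ) (c : Fin 2 → ℝ) :
    bregCode φ x c = min (breg φ x (c 0)) (breg φ x (c 1)) := by
  apply le_antisymm
  · exact le_min (ciInf_le (Set.finite_range _).bddBelow 0)
      (ciInf_le (Set.finite_range _).bddBelow 1)
  · exact le_ciInf fun j => by fin_cases j; exacts [min_le_left _ _, min_le_right _ _]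

lemma bregCode_nonneg (hφ : φ = (fun x => x ^ 2) ∨ φ = fun x => Real.exp (-x))
    {k : ℕ} [Nonempty (Fin k)] (x : ℝ) (c : Fin k → ℝ) : 0 ≤ bregCode φ x c :=
  le_ciInf fun _ => breg_nonneg hφ _ _

lemma bregCode_le {k : ℕ} (x : ℝ) (c : Fin k → ℝ) (j : Fin k) :
    bregCode φ x c ≤ breg φ x (c j) := ciInf_le (Set.finite_range _).bddBelow j

lemma measurable_bregCode_one (hφ : φ = (fun x => x ^ 2) ∨ φ = fun x => Real.exp (-x))
    (c : Fin 1 → ℝ) : Measurable fun x => bregCode φ x c := by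
  simp only [bregCode_one]; exact (breg_cont hφ _).measurable

lemma measurable_bregCode_two (hφ : φ = (fun x => x ^ 2) ∨ φ = fun x => Real.exp (-x))
    (c : Fin 2 → ℝ) : Measurable fun x => bregCode φ x c := by
  simp only [bregCode_two]
  exact ((breg_cont hφ (c 0)).min (breg_cont hφ (c 1))).measurable

lemma breg_self (hφ : φ = (fun x => x ^ 2) ∨ φ = fun x => Real.exp (-x)) (x : ℝ) :
    breg φ x x = 0 := by
  rcases hφ with h | h <;> subst h
  · rw [breg_sq]; ring
  · rw [breg_exp]; ring

-- Section 2 : atomic measures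
lemma meas_decomp (Q : Measure ℝ) (S : Finset ℝ) (hQS : Q (↑S : Set ℝ)ᶜ = 0) :
    Q = ∑ a ∈ S, Q {a} • Measure.dirac a := by
  ext A hA
  have hSm : MeasurableSet (↑S : Set ℝ) := S.finite_toSet.measurableSet
  have h2 := measure_inter_add_diff A hSm (μ := Q)
  have h3 : Q (A \ ↑S) = 0 := measure_mono_null (Set.diff_subset_compl A ↑S) hQS
  have h1 : Q A = Q (A ∩ ↑S) := by rw [← h2, h3, add_zero]
  have h4 : A ∩ ↑S = ⋃ a ∈ S, A ∩ {a} := by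
    ext x; simp only [Set.mem_inter_iff, Set.mem_iUnion, Set.mem_singleton_iff]
    constructor
    · rintro ⟨hx, hs⟩; exact ⟨x, hs, hx, rfl⟩
    · rintro ⟨a, ha, hx, rfl⟩; exact ⟨hx, ha⟩
  have h5 : Q (A ∩ ↑S) = ∑ a ∈ S, Q (A ∩ {a}) := by
    rw [h4]
    refine measure_biUnion_finset ?_ fun a _ => hA.inter (measurableSet_singleton a)
    intro a _ b _ hab
    refine Set.disjoint_left.mpr fun x hx hx' => hab ?_
    rw [← hx.2, ← hx'.2]
  rw [h1, h5, Measure.finset_sum_apply]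
  refine Finset.sum_congr rfl fun a _ => ?_
  rw [Measure.smul_apply, Measure.dirac_apply' a hA]
  by_cases haA : a ∈ A
  · rw [Set.inter_eq_right.mpr (Set.singleton_subset_iff.mpr haA)]
    simp [Set.indicator_of_mem haA]
  · rw [Set.inter_singleton_eq_empty.mpr haA]
    simp [Set.indicator_of_notMem haA]

lemma my_integrable_dirac (f : ℝ → ℝ) (hf : Measurable f) (a : ℝ) :
    Integrable f (Measure.dirac a) := by
  refine ⟨hf.aestronglyMeasurable, ?_⟩
  simp [HasFiniteIntegral, lintegral_dirac]

lemma integral_decomp (Q : Measure ℝ) [IsFiniteMeasure Q] (S : Finset ℝ)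
    (hQS : Q (↑S : Set ℝ)ᶜ = 0) (f : ℝ → ℝ) (hf : Measurable f) :
    ∫ x, f x ∂Q = ∑ a ∈ S, (Q {a}).toReal * f a := by
  have hint : ∀ a ∈ S, Integrable f (Q {a} • Measure.dirac a) :=
    fun a _ => (my_integrable_dirac f hf a).smul_measure (measure_ne_top Q _)
  conv_lhs => rw [meas_decomp Q S hQS]
  rw [integral_finset_sum_measure hint]
  refine Finset.sum_congr rfl fun a _ => ?_
  rw [integral_smul_measure, integral_dirac, smul_eq_mul]

-- Section 3 : nonemptiness of subProbC for finitely-supported measures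
lemma exists_mem_subProbC {k : ℕ} (P : Measure ℝ) [IsFiniteMeasure P] (φ : ℝ → ℝ)
    (c : Fin k → ℝ) (hf : Measurable fun x => bregCode φ x c)
    (hf0 : ∀ x, 0 ≤ bregCode φ x c)
    (S : Finset ℝ) (hS : S.Nonempty) (hSc : P (↑S : Set ℝ)ᶜ = 0)
    (h : ℝ) (h0 : 0 ≤ h) (hPh : ENNReal.ofReal h ≤ P Set.univ) :
    (subProbC P φ h c).Nonempty := by
  classical
  set f := fun x => bregCode φ x c with hfdef
  have key : ∀ A : Set ℝ, P A = P (A ∩ ↑S) := by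
    intro A
    have h2 := measure_inter_add_diff A S.finite_toSet.measurableSet (μ := P)
    have h3 : P (A \ ↑S) = 0 := measure_mono_null (Set.diff_subset_compl A ↑S) hSc
    rw [← h2, h3, add_zero]
  set V := S.image f with hV
  have hVne : V.Nonempty := hS.image f
  set W := V.filter (fun v => ENNReal.ofReal h ≤ P {x | f x ≤ v}) with hWdef
  have hWne : W.Nonempty := by
    refine ⟨V.max' hVne, Finset.mem_filter.mpr ⟨V.max'_mem hVne, ?_⟩⟩
    refine le_trans hPh ?_
    rw [key Set.univ, key {x | f x ≤ V.max' hVne}, Set.univ_inter]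
    apply measure_mono
    intro x hx
    exact ⟨V.le_max' _ (Finset.mem_image_of_mem f hx), hx⟩
  set M := W.min' hWne with hMdef
  have hMW : M ∈ W := W.min'_mem hWne
  have hMV : M ∈ V := (Finset.mem_filter.mp hMW).1
  have hMle : ENNReal.ofReal h ≤ P {x | f x ≤ M} := (Finset.mem_filter.mp hMW).2
  have hM0 : 0 ≤ M := by
    obtain ⟨x, -, hx⟩ := Finset.mem_image.mp hMV
    rw [← hx]; exact hf0 x
  have hsq : Real.sqrt M ^ 2 = M := Real.sq_sqrt hM0
  have hballM : P {x | f x < M} ≤ ENNReal.ofReal h := by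
    rw [key {x | f x < M}]
    set W2 := V.filter (fun v => v < M) with hW2def
    rcases W2.eq_empty_or_nonempty with hW2 | hW2
    · have hempty : {x | f x < M} ∩ ↑S = ∅ := by
        ext x
        simp only [Set.mem_inter_iff, Set.mem_setOf_eq, Set.mem_empty_iff_false, iff_false,
          not_and]
        intro hfx hxS
        have : f x ∈ W2 := Finset.mem_filter.mpr ⟨Finset.mem_image_of_mem f hxS, hfx⟩
        simp [hW2] at this
      rw [hempty]; simp
    · set v2 := W2.max' hW2 with hv2def
      have hv2V : v2 ∈ V := (Finset.mem_filter.mp (W2.max'_mem hW2)).1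
      have hv2M : v2 < M := (Finset.mem_filter.mp (W2.max'_mem hW2)).2
      have hv2W : v2 ∉ W := by
        intro hmem
        exact absurd (W.min'_le _ hmem) (not_le.mpr hv2M)
      have hv2lt : P {x | f x ≤ v2} ≤ ENNReal.ofReal h := by
        by_contra hcon
        exact hv2W (Finset.mem_filter.mpr ⟨hv2V, (not_le.mp hcon).le⟩)
      refine le_trans (measure_mono ?_) hv2lt
      rintro x ⟨hfx, hxS⟩
      exact W2.le_max' _ (Finset.mem_filter.mpr ⟨Finset.mem_image_of_mem f hxS, hfx⟩)
  set T := {r : ℝ | 0 ≤ r ∧ P (bBall φ c r) ≤ ENNReal.ofReal h ∧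
        ENNReal.ofReal h ≤ P (bBallc φ c r)} with hTdef
  have hballs : ∀ r : ℝ, bBall φ c r = {x | f x < r ^ 2} := fun r => rfl
  have hballsc : ∀ r : ℝ, bBallc φ c r = {x | f x ≤ r ^ 2} := fun r => rfl
  have hTmem : Real.sqrt M ∈ T := by
    refine ⟨Real.sqrt_nonneg M, ?_, ?_⟩
    · rw [hballs, hsq]; exact hballM
    · rw [hballsc, hsq]; exact hMle
  have hTne : T.Nonempty := ⟨_, hTmem⟩
  have hTbdd : BddBelow T := ⟨0, fun r hr => hr.1⟩
  have hr0eq : trimRadius P φ h c = sInf T := rfl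
  set r₀ := sInf T with hr₀def
  have hr₀0 : 0 ≤ r₀ := le_csInf hTne fun r hr => hr.1
  have hr₀le : r₀ ≤ Real.sqrt M := csInf_le hTbdd hTmem
  have hsq2 : r₀ ^ 2 ≤ M := by
    calc r₀ ^ 2 ≤ Real.sqrt M ^ 2 := pow_le_pow_left₀ hr₀0 hr₀le 2
    _ = M := hsq
  have hs_le : P (bBall φ c r₀) ≤ ENNReal.ofReal h := by
    refine le_trans (measure_mono ?_) hballM
    rw [hballs]
    intro x hx
    simp only [Set.mem_setOf_eq] at hx ⊢
    exact lt_of_lt_of_le hx hsq2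
  have hc_ge : ENNReal.ofReal h ≤ P (bBallc φ c r₀) := by
    set V2 := V.filter (fun v => r₀ ^ 2 < v) with hV2def
    rcases V2.eq_empty_or_nonempty with hV2 | hV2
    · rw [hballsc, key {x | f x ≤ r₀ ^ 2}]
      refine le_trans hPh ?_
      rw [key Set.univ, Set.univ_inter]
      refine measure_mono fun x hxS => ⟨?_, hxS⟩
      simp only [Set.mem_setOf_eq]
      by_contra hcon
      have : f x ∈ V2 := Finset.mem_filter.mpr ⟨Finset.mem_image_of_mem f hxS, not_le.mp hcon⟩
      simp [hV2] at this
    · set δ := V2.min' hV2 - r₀ ^ 2 with hδdef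
      have hδ0 : 0 < δ := by
        have := (Finset.mem_filter.mp (V2.min'_mem hV2)).2
        simp only [hδdef]; linarith
      have hlt : r₀ < Real.sqrt (r₀ ^ 2 + δ) := by
        rw [Real.lt_sqrt hr₀0]; linarith
      obtain ⟨r, hrT, hrlt⟩ := (csInf_lt_iff hTbdd hTne).mp hlt
      have hr0 : 0 ≤ r := hrT.1
      have hr2 : r ^ 2 < r₀ ^ 2 + δ := (Real.lt_sqrt hr0).mp hrlt
      refine le_trans hrT.2.2 ?_
      rw [hballsc, hballsc, key {x | f x ≤ r ^ 2}, key {x | f x ≤ r₀ ^ 2}]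
      refine measure_mono ?_
      rintro x ⟨hfx, hxS⟩
      simp only [Set.mem_setOf_eq] at hfx
      refine ⟨?_, hxS⟩
      simp only [Set.mem_setOf_eq]
      by_contra hcon
      have hmem : f x ∈ V2 :=
        Finset.mem_filter.mpr ⟨Finset.mem_image_of_mem f hxS, not_le.mp hcon⟩
      have := V2.min'_le _ hmem
      linarith
  -- construction
  set A := bBall φ c r₀ with hAdef
  set Sp := {x | f x = r₀ ^ 2} with hSpdef
  set Cb := bBallc φ c r₀ with hCbdef
  have hAm : MeasurableSet A := hf measurableSet_Iio
  have hSpm : MeasurableSet Sp := hf (measurableSet_singleton _)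
  have hCbm : MeasurableSet Cb := hf measurableSet_Iic
  have hdisj : Disjoint A Sp := by
    rw [Set.disjoint_left]
    intro x hx hx2
    rw [hAdef, hballs] at hx
    rw [hSpdef] at hx2
    simp only [Set.mem_setOf_eq] at hx hx2
    exact absurd hx2 (ne_of_lt hx)
  have hunion : A ∪ Sp = Cb := by
    rw [hAdef, hSpdef, hCbdef, hballs, hballsc]
    ext x
    simp only [Set.mem_union, Set.mem_setOf_eq]
    exact (le_iff_lt_or_eq (a := f x) (b := r₀ ^ 2)).symm
  set t := (ENNReal.ofReal h - P A) / P Sp with htdef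
  set Q := P.restrict A + t • P.restrict Sp with hQdef
  have hPACb : P A + P Sp = P Cb := by
    rw [← hunion, measure_union hdisj hSpm]
  have hsum_ge : ENNReal.ofReal h ≤ P A + P Sp := hPACb ▸ hc_ge
  have ht1 : t ≤ 1 := by
    rcases eq_or_ne (P Sp) 0 with hSp0 | hSp0
    · have : ENNReal.ofReal h - P A = 0 := by
        rw [tsub_eq_zero_iff_le]
        calc ENNReal.ofReal h ≤ P A + P Sp := hsum_ge
        _ = P A := by rw [hSp0, add_zero]
      rw [htdef, this, ENNReal.zero_div]; exact zero_le_one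
    · rw [htdef, ENNReal.div_le_iff hSp0 (measure_ne_top P Sp), one_mul,
        tsub_le_iff_right]
      exact le_trans hsum_ge (by rw [add_comm])
  have hQuniv : Q Set.univ = ENNReal.ofReal h := by
    rw [hQdef, Measure.add_apply, Measure.smul_apply, Measure.restrict_apply_univ,
      Measure.restrict_apply_univ, smul_eq_mul]
    rcases eq_or_ne (P Sp) 0 with hSp0 | hSp0
    · have hPA : P A = ENNReal.ofReal h := by
        refine le_antisymm hs_le ?_
        calc ENNReal.ofReal h ≤ P A + P Sp := hsum_ge
        _ = P A := by rw [hSp0, add_zero]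
      rw [hSp0, mul_zero, add_zero, hPA]
    · rw [htdef, ENNReal.div_mul_cancel hSp0 (measure_ne_top P Sp),
        add_tsub_cancel_of_le hs_le]
  have hQle : Q ≤ P := by
    rw [Measure.le_iff]
    intro B hB
    rw [hQdef, Measure.add_apply, Measure.smul_apply, Measure.restrict_apply hB,
      Measure.restrict_apply hB, smul_eq_mul]
    calc P (B ∩ A) + t * P (B ∩ Sp)
        ≤ P (B ∩ A) + 1 * P (B ∩ Sp) := by
          exact add_le_add_right (mul_le_mul_left ht1 _) _
      _ = P (B ∩ A) + P (B ∩ Sp) := by rw [one_mul]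
      _ = P ((B ∩ A) ∪ (B ∩ Sp)) := by
          refine (measure_union ?_ (hB.inter hSpm)).symm
          exact (hdisj.mono Set.inter_subset_right Set.inter_subset_right)
      _ ≤ P B := by
          refine measure_mono ?_
          rw [← Set.inter_union_distrib_left]
          exact Set.inter_subset_left
  refine ⟨(ENNReal.ofReal h)⁻¹ • Q, ⟨Q, hQle, hQuniv, rfl⟩, ?_, ?_⟩
  · have hrw : bBall φ c (trimRadius P φ h c) = A := by rw [hr0eq]
    rw [hrw, Measure.restrict_smul, Measure.restrict_smul]
    congr 1
    rw [hQdef, Measure.restrict_add, Measure.restrict_restrict hAm,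
      Measure.restrict_smul, Measure.restrict_restrict hAm, Set.inter_self]
    have : A ∩ Sp = ∅ := Set.disjoint_iff_inter_eq_empty.mp hdisj
    rw [this, Measure.restrict_empty, smul_zero, add_zero]
  · have hrw : bBallc φ c (trimRadius P φ h c) = Cb := by rw [hr0eq]
    rw [hrw, Measure.smul_apply, hQdef, Measure.add_apply, Measure.smul_apply,
      Measure.restrict_apply hCbm.compl, Measure.restrict_apply hCbm.compl]
    have h1 : Cbᶜ ∩ A = ∅ := by
      rw [Set.inter_comm, ← Set.disjoint_iff_inter_eq_empty]
      exact Set.disjoint_compl_right_iff_subset.mpr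
        (hunion ▸ Set.subset_union_left)
    have h2 : Cbᶜ ∩ Sp = ∅ := by
      rw [Set.inter_comm, ← Set.disjoint_iff_inter_eq_empty]
      exact Set.disjoint_compl_right_iff_subset.mpr
        (hunion ▸ Set.subset_union_right)
    rw [h1, h2]
    simp



-- Section 4 : representation and bounds for trimmed distortion
lemma subProb_repr {k : ℕ} (P : Measure ℝ) [IsFiniteMeasure P] (φ : ℝ → ℝ) (c : Fin k → ℝ)
    (hf : Measurable fun x => bregCode φ x c)
    (S : Finset ℝ) (hSc : P (↑S : Set ℝ)ᶜ = 0)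
    (h : ℝ) (h0 : 0 < h)
    (Pt : Measure ℝ) (hPt : Pt ∈ subProb P h) :
    ∃ Q : Measure ℝ, Q ≤ P ∧ Q Set.univ = ENNReal.ofReal h ∧
      (∀ A : Set ℝ, Pt A = 0 → Q A = 0) ∧
      h * distor φ Pt c = ∑ a ∈ S, (Q {a}).toReal * bregCode φ a c := by
  obtain ⟨Q, hQle, hQu, hPtQ⟩ := hPt
  have hh0 : ENNReal.ofReal h ≠ 0 := by
    simp only [ne_eq, ENNReal.ofReal_eq_zero, not_le]; exact h0
  have hQPt : Q = ENNReal.ofReal h • Pt := by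
    rw [hPtQ, smul_smul, ENNReal.mul_inv_cancel hh0 ENNReal.ofReal_ne_top, one_smul]
  haveI hQfin : IsFiniteMeasure Q := ⟨by rw [hQu]; exact ENNReal.ofReal_lt_top⟩
  have hQS : Q (↑S : Set ℝ)ᶜ = 0 :=
    le_antisymm (le_trans (Measure.le_iff'.mp hQle _) hSc.le) zero_le
  refine ⟨Q, hQle, hQu, ?_, ?_⟩
  · intro A hA
    rw [hQPt, Measure.smul_apply, hA, smul_eq_mul, mul_zero]
  · rw [distor, hPtQ, integral_smul_measure, ENNReal.toReal_inv, ENNReal.toReal_ofReal h0.le,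
      integral_decomp Q S hQS _ hf, smul_eq_mul, ← mul_assoc,
      mul_inv_cancel₀ (ne_of_gt h0), one_mul]

lemma mass_lower (Q : Measure ℝ) [IsFiniteMeasure Q] (A : Set ℝ) (hA : MeasurableSet A)
    (m b : ℝ≥0∞) (hQu : Q Set.univ = m) (hcompl : Q Aᶜ ≤ b) : m - b ≤ Q A := by
  have h1 : Q A + Q Aᶜ = m := by rw [measure_add_measure_compl hA, hQu]
  calc m - b ≤ m - Q Aᶜ := tsub_le_tsub_left hcompl m
  _ = Q A := by rw [← h1, ENNReal.add_sub_cancel_right (measure_ne_top Q _)]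

variable {φ : ℝ → ℝ}

lemma trimDistor_im_nonneg (hφ : φ = (fun x => x ^ 2) ∨ φ = fun x => Real.exp (-x))
    {k : ℕ} [Nonempty (Fin k)] (P : Measure ℝ) (h : ℝ) (h0 : 0 ≤ h) (c : Fin k → ℝ) :
    ∀ r ∈ (fun Pt => h * distor φ Pt c) '' subProbC P φ h c, 0 ≤ r := by
  rintro r ⟨Pt, -, rfl⟩
  exact mul_nonneg h0 (integral_nonneg fun x => bregCode_nonneg hφ x c)

lemma trimDistor_nonneg (hφ : φ = (fun x => x ^ 2) ∨ φ = fun x => Real.exp (-x))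
    {k : ℕ} [Nonempty (Fin k)] (P : Measure ℝ) (h : ℝ) (h0 : 0 ≤ h) (c : Fin k → ℝ) :
    0 ≤ trimDistor P φ h c :=
  Real.sInf_nonneg (trimDistor_im_nonneg hφ P h h0 c)

lemma trimDistor_le_of (hφ : φ = (fun x => x ^ 2) ∨ φ = fun x => Real.exp (-x))
    {k : ℕ} [Nonempty (Fin k)] (P : Measure ℝ) (h : ℝ) (h0 : 0 ≤ h) (c : Fin k → ℝ)
    (K : ℝ) (hK : 0 ≤ K)
    (hall : ∀ Pt ∈ subProbC P φ h c, h * distor φ Pt c ≤ K) :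
    trimDistor P φ h c ≤ K := by
  rcases (subProbC P φ h c).eq_empty_or_nonempty with he | ⟨Pt, hPt⟩
  · rw [trimDistor, he, Set.image_empty]
    rw [Real.sInf_empty]; exact hK
  · exact le_trans
      (csInf_le ⟨0, fun r hr => trimDistor_im_nonneg hφ P h h0 c r hr⟩
        (Set.mem_image_of_mem _ hPt)) (hall Pt hPt)

lemma trimDistor_ge_of {k : ℕ} (P : Measure ℝ) (h : ℝ) (c : Fin k → ℝ) (ε : ℝ)
    (hne : (subProbC P φ h c).Nonempty)
    (hall : ∀ Pt ∈ subProbC P φ h c, ε ≤ h * distor φ Pt c) :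
    ε ≤ trimDistor P φ h c := by
  refine le_csInf (hne.image _) ?_
  rintro r ⟨Pt, hPt, rfl⟩
  exact hall Pt hPt

lemma optTrim_nonneg (hφ : φ = (fun x => x ^ 2) ∨ φ = fun x => Real.exp (-x))
    (P : Measure ℝ) (h : ℝ) (h0 : 0 ≤ h) (j : ℕ) [Nonempty (Fin j)] :
    0 ≤ optTrim P φ Set.univ h j := by
  refine Real.sInf_nonneg ?_
  rintro r ⟨c, -, rfl⟩
  exact trimDistor_nonneg hφ P h h0 c

lemma optTrim_le (hφ : φ = (fun x => x ^ 2) ∨ φ = fun x => Real.exp (-x))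
    (P : Measure ℝ) (h : ℝ) (h0 : 0 ≤ h) {j : ℕ} [Nonempty (Fin j)] (c : Fin j → ℝ) :
    optTrim P φ Set.univ h j ≤ trimDistor P φ h c := by
  refine csInf_le ⟨0, ?_⟩ ⟨c, fun i => trivial, rfl⟩
  rintro r ⟨c', -, rfl⟩
  exact trimDistor_nonneg hφ P h h0 c'

lemma optTrim_ge (P : Measure ℝ) (h : ℝ) {j : ℕ} (ε : ℝ)
    (hall : ∀ c : Fin j → ℝ, ε ≤ trimDistor P φ h c) :
    ε ≤ optTrim P φ Set.univ h j := by
  refine le_csInf ⟨trimDistor P φ h (fun _ => 0), fun _ => 0, fun i => trivial, rfl⟩ ?_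
  rintro r ⟨c, -, rfl⟩
  exact hall c

-- Section 5 : the two-atom measure P and the corrupted measure Qmix
lemma P_apply {p : ℝ} {P : Measure ℝ}
    (hP : P = ENNReal.ofReal (1 - p) • Measure.dirac (-1 : ℝ) +
        ENNReal.ofReal p • Measure.dirac (1 : ℝ)) (A : Set ℝ) :
    P A = ENNReal.ofReal (1 - p) * A.indicator 1 (-1) + ENNReal.ofReal p * A.indicator 1 1 := by
  rw [hP, Measure.add_apply, Measure.smul_apply, Measure.smul_apply,
    Measure.dirac_apply, Measure.dirac_apply, smul_eq_mul, smul_eq_mul]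

lemma P_univ {p : ℝ} (hp0 : 0 ≤ p) (hp : p ≤ 1) {P : Measure ℝ}
    (hP : P = ENNReal.ofReal (1 - p) • Measure.dirac (-1 : ℝ) +
        ENNReal.ofReal p • Measure.dirac (1 : ℝ)) : P Set.univ = 1 := by
  rw [P_apply hP]
  simp only [Set.indicator_of_mem (Set.mem_univ _), Pi.one_apply, mul_one]
  rw [← ENNReal.ofReal_add (by linarith) (by linarith)]
  norm_num

lemma P_fin {p : ℝ} (hp0 : 0 ≤ p) (hp : p ≤ 1) {P : Measure ℝ}
    (hP : P = ENNReal.ofReal (1 - p) • Measure.dirac (-1 : ℝ) +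
        ENNReal.ofReal p • Measure.dirac (1 : ℝ)) : IsFiniteMeasure P :=
  ⟨by rw [P_univ hp0 hp hP]; exact one_lt_top⟩

lemma P_SC {p : ℝ} {P : Measure ℝ}
    (hP : P = ENNReal.ofReal (1 - p) • Measure.dirac (-1 : ℝ) +
        ENNReal.ofReal p • Measure.dirac (1 : ℝ)) :
    P (↑({-1, 1} : Finset ℝ) : Set ℝ)ᶜ = 0 := by
  rw [P_apply hP]
  have h1 : (-1 : ℝ) ∉ (↑({-1, 1} : Finset ℝ) : Set ℝ)ᶜ := by simp
  have h2 : (1 : ℝ) ∉ (↑({-1, 1} : Finset ℝ) : Set ℝ)ᶜ := by simp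
  rw [Set.indicator_of_notMem h1, Set.indicator_of_notMem h2, mul_zero, mul_zero, add_zero]

lemma P_m1 {p : ℝ} {P : Measure ℝ}
    (hP : P = ENNReal.ofReal (1 - p) • Measure.dirac (-1 : ℝ) +
        ENNReal.ofReal p • Measure.dirac (1 : ℝ)) :
    P {(-1 : ℝ)} = ENNReal.ofReal (1 - p) := by
  rw [P_apply hP]
  norm_num

lemma P_m1c {p : ℝ} {P : Measure ℝ}
    (hP : P = ENNReal.ofReal (1 - p) • Measure.dirac (-1 : ℝ) +
        ENNReal.ofReal p • Measure.dirac (1 : ℝ)) :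
    P {(-1 : ℝ)}ᶜ = ENNReal.ofReal p := by
  rw [P_apply hP]
  have h1 : (-1 : ℝ) ∉ ({(-1 : ℝ)}ᶜ : Set ℝ) := by simp
  have h2 : (1 : ℝ) ∈ ({(-1 : ℝ)}ᶜ : Set ℝ) := by norm_num
  rw [Set.indicator_of_notMem h1, Set.indicator_of_mem h2, mul_zero, zero_add, Pi.one_apply,
    mul_one]

lemma P_1c {p : ℝ} {P : Measure ℝ}
    (hP : P = ENNReal.ofReal (1 - p) • Measure.dirac (-1 : ℝ) +
        ENNReal.ofReal p • Measure.dirac (1 : ℝ)) :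
    P {(1 : ℝ)}ᶜ = ENNReal.ofReal (1 - p) := by
  rw [P_apply hP]
  have h1 : (-1 : ℝ) ∈ ({(1 : ℝ)}ᶜ : Set ℝ) := by norm_num
  have h2 : (1 : ℝ) ∉ ({(1 : ℝ)}ᶜ : Set ℝ) := by simp
  rw [Set.indicator_of_notMem h2, Set.indicator_of_mem h1, mul_zero, add_zero, Pi.one_apply,
    mul_one]



-- Section 5b : more breg facts
lemma breg_pos (hφ : φ = (fun x => x ^ 2) ∨ φ = fun x => Real.exp (-x))
    {x y : ℝ} (hxy : x ≠ y) : 0 < breg φ x y := by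
  rcases hφ with h | h <;> subst h
  · rw [breg_sq]
    have : x - y ≠ 0 := sub_ne_zero.mpr hxy
    positivity
  · rw [breg_exp]
    have h1 : (y - x) + 1 < Real.exp (y - x) :=
      Real.add_one_lt_exp (fun hc => hxy (by linarith [sub_eq_zero.mp hc]))
    have h2 : Real.exp (-x) = Real.exp (-y) * Real.exp (y - x) := by
      rw [← Real.exp_add]; ring_nf
    nlinarith [Real.exp_pos (-y)]

lemma exists_m (hφ : φ = (fun x => x ^ 2) ∨ φ = fun x => Real.exp (-x)) :
    ∃ m : ℝ, 0 < m ∧ ∀ y : ℝ, m ≤ breg φ (-1) y + breg φ 1 y := by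
  rcases hφ with h | h <;> subst h
  · exact ⟨2, by norm_num, fun y => by rw [breg_sq, breg_sq]; nlinarith [sq_nonneg y]⟩
  · refine ⟨Real.exp 1 + Real.exp (-1) - 2, ?_, fun y => ?_⟩
    · nlinarith [Real.add_one_lt_exp (one_ne_zero (α := ℝ)), Real.exp_pos (-1 : ℝ)]
    · rw [breg_exp, breg_exp]
      simp only [neg_neg]
      have h1 : y + 1 ≤ Real.exp y := Real.add_one_le_exp y
      have h2 : Real.exp (-y) * Real.exp y = 1 := by rw [← Real.exp_add]; simp
      nlinarith [Real.exp_pos (-y), Real.exp_pos y,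
        mul_le_mul_of_nonneg_right h1 (Real.exp_pos (-y)).le]

lemma breg_far (hφ : φ = (fun x => x ^ 2) ∨ φ = fun x => Real.exp (-x))
    {R : ℝ} (hR : 0 ≤ R) {y : ℝ} (hy : |y| ≤ R) {N : ℝ} (hN : R + 1 ≤ N) :
    Real.exp (-R) * (N - R - 1) ≤ breg φ N y := by
  have hyR := abs_le.mp hy
  rcases hφ with h | h <;> subst h
  · rw [breg_sq]
    have he : Real.exp (-R) ≤ 1 := by
      have := Real.exp_le_exp.mpr (neg_nonpos.mpr hR)
      rwa [Real.exp_zero] at this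
    have e1 : 0 ≤ (1 - Real.exp (-R)) * (N - R - 1) :=
      mul_nonneg (by linarith) (by linarith)
    have e2 : 0 ≤ (N - y) * (N - y - 1) := mul_nonneg (by linarith) (by linarith)
    nlinarith
  · rw [breg_exp]
    have h1 : Real.exp (-R) ≤ Real.exp (-y) := Real.exp_le_exp.mpr (by linarith)
    have h3 := mul_le_mul h1 (by linarith : N - R - 1 ≤ N - y - 1) (by linarith)
      (Real.exp_pos (-y)).le
    nlinarith [Real.exp_pos (-N)]

-- Section 5c : Qmix facts
lemma Qmix_apply (P : Measure ℝ) (γ N : ℝ) (A : Set ℝ) :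
    Qmix P γ N A = ENNReal.ofReal (1 - γ) * P A + ENNReal.ofReal γ * A.indicator 1 N := by
  rw [Qmix, Measure.add_apply, Measure.smul_apply, Measure.smul_apply,
    Measure.dirac_apply, smul_eq_mul, smul_eq_mul]

lemma Qmix_fin {p : ℝ} (hp0 : 0 ≤ p) (hp : p ≤ 1) {P : Measure ℝ}
    (hP : P = ENNReal.ofReal (1 - p) • Measure.dirac (-1 : ℝ) +
        ENNReal.ofReal p • Measure.dirac (1 : ℝ)) (γ N : ℝ) :
    IsFiniteMeasure (Qmix P γ N) := by
  constructor
  rw [Qmix_apply, P_univ hp0 hp hP, mul_one, Set.indicator_of_mem (Set.mem_univ N),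
    Pi.one_apply, mul_one]
  exact ENNReal.add_lt_top.mpr ⟨ENNReal.ofReal_lt_top, ENNReal.ofReal_lt_top⟩

lemma Qmix_univ_ge {p : ℝ} (hp0 : 0 ≤ p) (hp : p ≤ 1) {P : Measure ℝ}
    (hP : P = ENNReal.ofReal (1 - p) • Measure.dirac (-1 : ℝ) +
        ENNReal.ofReal p • Measure.dirac (1 : ℝ)) (γ N h : ℝ) (hh : h ≤ 1) :
    ENNReal.ofReal h ≤ Qmix P γ N Set.univ := by
  rw [Qmix_apply, P_univ hp0 hp hP, mul_one, Set.indicator_of_mem (Set.mem_univ N),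
    Pi.one_apply, mul_one]
  calc ENNReal.ofReal h ≤ ENNReal.ofReal 1 := ENNReal.ofReal_le_ofReal hh
  _ = ENNReal.ofReal ((1 - γ) + γ) := by norm_num
  _ ≤ _ := ENNReal.ofReal_add_le

lemma Qmix_SC {p : ℝ} {P : Measure ℝ}
    (hP : P = ENNReal.ofReal (1 - p) • Measure.dirac (-1 : ℝ) +
        ENNReal.ofReal p • Measure.dirac (1 : ℝ)) (γ N : ℝ) :
    Qmix P γ N (↑({-1, 1, N} : Finset ℝ) : Set ℝ)ᶜ = 0 := by
  rw [Qmix_apply]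
  have h1 : P (↑({-1, 1, N} : Finset ℝ) : Set ℝ)ᶜ = 0 := by
    refine measure_mono_null ?_ (P_SC hP)
    intro x hx
    simp only [Set.mem_compl_iff, Finset.coe_insert, Set.mem_insert_iff, Finset.coe_singleton,
      Set.mem_singleton_iff] at *
    tauto
  have h2 : N ∉ (↑({-1, 1, N} : Finset ℝ) : Set ℝ)ᶜ := by simp
  rw [h1, Set.indicator_of_notMem h2, mul_zero, mul_zero, add_zero]

lemma Qmix_N_compl {p : ℝ} (hp0 : 0 ≤ p) (hp : p ≤ 1) {P : Measure ℝ}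
    (hP : P = ENNReal.ofReal (1 - p) • Measure.dirac (-1 : ℝ) +
        ENNReal.ofReal p • Measure.dirac (1 : ℝ)) (γ N : ℝ) :
    Qmix P γ N {N}ᶜ ≤ ENNReal.ofReal (1 - γ) := by
  rw [Qmix_apply]
  have h2 : N ∉ ({N}ᶜ : Set ℝ) := by simp
  rw [Set.indicator_of_notMem h2, mul_zero, add_zero]
  calc ENNReal.ofReal (1 - γ) * P {N}ᶜ ≤ ENNReal.ofReal (1 - γ) * 1 := by
        refine mul_le_mul_right ?_ _
        rw [← P_univ hp0 hp hP]
        exact measure_mono (Set.subset_univ _)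
  _ = _ := mul_one _

lemma Qmix_pair_ge {p : ℝ} (hp0 : 0 ≤ p) (hp : p ≤ 1) {P : Measure ℝ}
    (hP : P = ENNReal.ofReal (1 - p) • Measure.dirac (-1 : ℝ) +
        ENNReal.ofReal p • Measure.dirac (1 : ℝ)) {γ : ℝ} (hγ0 : 0 ≤ γ) (hγ1 : γ ≤ 1)
    (N : ℝ) :
    ENNReal.ofReal ((1 - γ) * (1 - p) + γ) ≤ Qmix P γ N {-1, N} := by
  rw [Qmix_apply, ENNReal.ofReal_add (by nlinarith) hγ0, ENNReal.ofReal_mul (by linarith)]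
  refine add_le_add ?_ ?_
  · refine mul_le_mul_right ?_ _
    rw [← P_m1 hP]
    exact measure_mono (by simp)
  · rw [Set.indicator_of_mem (by simp : N ∈ ({-1, N} : Set ℝ)), Pi.one_apply, mul_one]



-- Section 5d : key trimmed distortion bounds
lemma bBall_zero_empty {k : ℕ} (φ : ℝ → ℝ) (c : Fin k → ℝ)
    (hf0 : ∀ x, 0 ≤ bregCode φ x c) : bBall φ c 0 = ∅ := by
  ext x
  simp only [bBall, Set.mem_setOf_eq, Set.mem_empty_iff_false, iff_false, not_lt]
  calc (0:ℝ) ^ 2 = 0 := by norm_num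
  _ ≤ _ := hf0 x

lemma trimRadius_zero {k : ℕ} (P : Measure ℝ) (φ : ℝ → ℝ) (h : ℝ) (c : Fin k → ℝ)
    (hP0 : P (bBall φ c 0) ≤ ENNReal.ofReal h)
    (hPc : ENNReal.ofReal h ≤ P (bBallc φ c 0)) :
    trimRadius P φ h c = 0 := by
  have h0mem : (0:ℝ) ∈ {r : ℝ | 0 ≤ r ∧ P (bBall φ c r) ≤ ENNReal.ofReal h ∧
      ENNReal.ofReal h ≤ P (bBallc φ c r)} := ⟨le_rfl, hP0, hPc⟩
  exact le_antisymm (csInf_le ⟨0, fun r hr => hr.1⟩ h0mem)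
    (le_csInf ⟨0, h0mem⟩ fun r hr => hr.1)

lemma bregCode_pair_left (hφ : φ = (fun x => x ^ 2) ∨ φ = fun x => Real.exp (-x))
    (a b : ℝ) : bregCode φ a ![a, b] = 0 := by
  rw [bregCode_two]
  simp only [Matrix.cons_val_zero, Matrix.cons_val_one, Matrix.head_cons]
  rw [breg_self hφ]
  exact min_eq_left (breg_nonneg hφ _ _)

lemma bregCode_pair_right (hφ : φ = (fun x => x ^ 2) ∨ φ = fun x => Real.exp (-x))
    (a b : ℝ) : bregCode φ b ![a, b] = 0 := by
  rw [bregCode_two]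
  simp only [Matrix.cons_val_zero, Matrix.cons_val_one, Matrix.head_cons]
  rw [breg_self hφ]
  exact min_eq_right (breg_nonneg hφ _ _)

lemma trimDistor_pair_zero (hφ : φ = (fun x => x ^ 2) ∨ φ = fun x => Real.exp (-x))
    {p : ℝ} (hp0 : 0 < p) (hp : p ≤ 1 / 2) {P : Measure ℝ}
    (hP : P = ENNReal.ofReal (1 - p) • Measure.dirac (-1 : ℝ) +
        ENNReal.ofReal p • Measure.dirac (1 : ℝ))
    (h'' : ℝ) (h0 : 0 < h'') :
    trimDistor P φ h'' ![(-1 : ℝ), 1] ≤ 0 := by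
  haveI := P_fin hp0.le (by linarith) hP
  refine trimDistor_le_of hφ P h'' h0.le _ 0 le_rfl ?_
  intro Pt hPt
  obtain ⟨Q, hQle, hQu, hQz, hval⟩ := subProb_repr P φ ![(-1:ℝ), 1]
    (measurable_bregCode_two hφ _) ({-1, 1} : Finset ℝ) (P_SC hP) h'' h0 Pt hPt.1
  rw [hval, Finset.sum_insert (by norm_num), Finset.sum_singleton,
    bregCode_pair_left hφ, bregCode_pair_right hφ, mul_zero, mul_zero, add_zero]

lemma trimDistor_single_zero (hφ : φ = (fun x => x ^ 2) ∨ φ = fun x => Real.exp (-x))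
    {p : ℝ} (hp0 : 0 < p) (hp : p ≤ 1 / 2) {P : Measure ℝ}
    (hP : P = ENNReal.ofReal (1 - p) • Measure.dirac (-1 : ℝ) +
        ENNReal.ofReal p • Measure.dirac (1 : ℝ))
    (h' : ℝ) (h0 : 0 < h') (h1 : h' ≤ 1 - p) :
    trimDistor P φ h' ![(-1 : ℝ)] ≤ 0 := by
  haveI := P_fin hp0.le (by linarith) hP
  set c : Fin 1 → ℝ := ![(-1 : ℝ)] with hc
  have hfc : ∀ x, bregCode φ x c = breg φ x (-1) := fun x => bregCode_one x c
  have hT0 : trimRadius P φ h' c = 0 := by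
    refine trimRadius_zero P φ h' c ?_ ?_
    · rw [bBall_zero_empty φ c (fun x => bregCode_nonneg hφ x c)]
      simp
    · refine le_trans ?_ (measure_mono (?_ : {(-1:ℝ)} ⊆ bBallc φ c 0))
      · rw [P_m1 hP]; exact ENNReal.ofReal_le_ofReal h1
      · intro x hx
        rw [Set.mem_singleton_iff] at hx
        subst hx
        show bregCode φ (-1) c ≤ (0:ℝ) ^ 2
        rw [hfc, breg_self hφ]
        norm_num
  refine trimDistor_le_of hφ P h' h0.le c 0 le_rfl ?_
  intro Pt hPt
  obtain ⟨Q, hQle, hQu, hQz, hval⟩ := subProb_repr P φ c (measurable_bregCode_one hφ _)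
    ({-1, 1} : Finset ℝ) (P_SC hP) h' h0 Pt hPt.1
  rw [hval]
  have hsupp := hPt.2.2
  rw [hT0] at hsupp
  have hone : ({(1:ℝ)} : Set ℝ) ⊆ (bBallc φ c 0)ᶜ := by
    intro x hx
    rw [Set.mem_singleton_iff] at hx; subst hx
    simp only [Set.mem_compl_iff, bBallc, Set.mem_setOf_eq, not_le]
    rw [hfc]
    calc (0:ℝ) ^ 2 = 0 := by norm_num
    _ < _ := breg_pos hφ (by norm_num)
  have hQ1 : Q {(1:ℝ)} = 0 := hQz _ (measure_mono_null hone hsupp)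
  rw [Finset.sum_insert (by norm_num), Finset.sum_singleton, hQ1, hfc, breg_self hφ]
  simp

lemma optTrim_single_pos (hφ : φ = (fun x => x ^ 2) ∨ φ = fun x => Real.exp (-x))
    {p : ℝ} (hp0 : 0 < p) (hp : p ≤ 1 / 2) {P : Measure ℝ}
    (hP : P = ENNReal.ofReal (1 - p) • Measure.dirac (-1 : ℝ) +
        ENNReal.ofReal p • Measure.dirac (1 : ℝ))
    (h' : ℝ) (h1 : 1 - p < h') (h2 : h' ≤ 1) (m : ℝ) (hm0 : 0 < m)
    (hm : ∀ y : ℝ, m ≤ breg φ (-1) y + breg φ 1 y) :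
    (h' - (1 - p)) * m ≤ optTrim P φ Set.univ h' 1 := by
  haveI := P_fin hp0.le (by linarith) hP
  have h0 : 0 < h' := by linarith
  refine optTrim_ge P h' _ ?_
  intro c
  refine trimDistor_ge_of P h' c _ ?_ ?_
  · refine exists_mem_subProbC P φ c (measurable_bregCode_one hφ _)
      (fun x => bregCode_nonneg hφ x c) ({-1, 1} : Finset ℝ)
      ⟨-1, Finset.mem_insert_self _ _⟩ (P_SC hP) h' h0.le ?_
    rw [P_univ hp0.le (by linarith) hP]
    exact ENNReal.ofReal_le_one.mpr h2
  · intro Pt hPt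
    obtain ⟨Q, hQle, hQu, hQz, hval⟩ := subProb_repr P φ c (measurable_bregCode_one hφ _)
      ({-1, 1} : Finset ℝ) (P_SC hP) h' h0 Pt hPt.1
    rw [hval, Finset.sum_insert (by norm_num), Finset.sum_singleton]
    haveI : IsFiniteMeasure Q := ⟨by rw [hQu]; exact ENNReal.ofReal_lt_top⟩
    have hqm : ENNReal.ofReal (h' - p) ≤ Q {(-1:ℝ)} := by
      rw [ENNReal.ofReal_sub _ hp0.le]
      exact mass_lower Q _ (measurableSet_singleton _) _ _ hQu
        (le_trans (Measure.le_iff'.mp hQle _) (P_m1c hP).le)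
    have hq1 : ENNReal.ofReal (h' - (1 - p)) ≤ Q {(1:ℝ)} := by
      rw [ENNReal.ofReal_sub _ (by linarith)]
      exact mass_lower Q _ (measurableSet_singleton _) _ _ hQu
        (le_trans (Measure.le_iff'.mp hQle _) (P_1c hP).le)
    have hqm' : h' - p ≤ (Q {(-1:ℝ)}).toReal :=
      (ENNReal.ofReal_le_iff_le_toReal (measure_ne_top Q _)).mp hqm
    have hq1' : h' - (1 - p) ≤ (Q {(1:ℝ)}).toReal :=
      (ENNReal.ofReal_le_iff_le_toReal (measure_ne_top Q _)).mp hq1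
    have e1 : bregCode φ (-1:ℝ) c = breg φ (-1) (c 0) := bregCode_one _ c
    have e2 : bregCode φ (1:ℝ) c = breg φ 1 (c 0) := bregCode_one _ c
    rw [e1, e2]
    have hb1 : 0 ≤ breg φ (-1:ℝ) (c 0) := breg_nonneg hφ _ _
    have hb2 : 0 ≤ breg φ (1:ℝ) (c 0) := breg_nonneg hφ _ _
    have hε : 0 ≤ h' - (1 - p) := by linarith
    have t1 : (h' - (1 - p)) * breg φ (-1:ℝ) (c 0) ≤ (Q {(-1:ℝ)}).toReal * breg φ (-1:ℝ) (c 0) :=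
      mul_le_mul_of_nonneg_right (by linarith) hb1
    have t2 : (h' - (1 - p)) * breg φ (1:ℝ) (c 0) ≤ (Q {(1:ℝ)}).toReal * breg φ (1:ℝ) (c 0) :=
      mul_le_mul_of_nonneg_right (by linarith) hb2
    nlinarith [mul_le_mul_of_nonneg_left (hm (c 0)) hε]



-- Section 5e : Qmix trimmed distortion bounds
lemma trimDistor_mixpair_le (hφ : φ = (fun x => x ^ 2) ∨ φ = fun x => Real.exp (-x))
    {p : ℝ} (hp0 : 0 < p) (hp : p ≤ 1 / 2) {P : Measure ℝ}
    (hP : P = ENNReal.ofReal (1 - p) • Measure.dirac (-1 : ℝ) +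
        ENNReal.ofReal p • Measure.dirac (1 : ℝ))
    {h : ℝ} (hh0 : 0 < h) (hh1 : h ≤ 1) (γ N : ℝ) :
    trimDistor (Qmix P γ N) φ h ![(-1 : ℝ), N] ≤ breg φ 1 (-1) := by
  haveI := Qmix_fin hp0.le (by linarith) hP γ N
  have hK0 : 0 ≤ breg φ 1 (-1) := breg_nonneg hφ _ _
  refine trimDistor_le_of hφ _ h hh0.le _ _ hK0 ?_
  intro Pt hPt
  obtain ⟨Q, hQle, hQu, hQz, hval⟩ := subProb_repr _ φ ![(-1:ℝ), N]
    (measurable_bregCode_two hφ _) ({-1, 1, N} : Finset ℝ) (Qmix_SC hP γ N) h hh0 Pt hPt.1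
  rw [hval]
  haveI : IsFiniteMeasure Q := ⟨by rw [hQu]; exact ENNReal.ofReal_lt_top⟩
  refine le_trans (Finset.sum_le_sum
    (g := fun a => if a = 1 then breg φ 1 (-1) else 0) ?_) ?_
  · intro a ha
    rcases Finset.mem_insert.mp ha with rfl | ha2
    · rw [bregCode_pair_left hφ, mul_zero]
      split_ifs
      · exact hK0
      · exact le_rfl
    rcases Finset.mem_insert.mp ha2 with rfl | ha3
    · rw [if_pos rfl]
      have hb : bregCode φ (1:ℝ) ![(-1:ℝ), N] ≤ breg φ 1 (-1) := by
        have := bregCode_le (φ := φ) (1:ℝ) ![(-1:ℝ), N] 0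
        simpa using this
      have hb0 : 0 ≤ bregCode φ (1:ℝ) ![(-1:ℝ), N] := bregCode_nonneg hφ _ _
      have ht : (Q {(1:ℝ)}).toReal ≤ 1 := by
        have h2 : Q {(1:ℝ)} ≤ ENNReal.ofReal h := by
          rw [← hQu]; exact measure_mono (Set.subset_univ _)
        have h3 := ENNReal.toReal_mono ENNReal.ofReal_ne_top h2
        rw [ENNReal.toReal_ofReal hh0.le] at h3
        linarith
      calc (Q {(1:ℝ)}).toReal * bregCode φ (1:ℝ) ![(-1:ℝ), N]
          ≤ 1 * breg φ 1 (-1) := mul_le_mul ht hb hb0 zero_le_one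
      _ = breg φ 1 (-1) := one_mul _
    · rw [Finset.mem_singleton] at ha3; subst ha3
      rw [bregCode_pair_right hφ, mul_zero]
      split_ifs
      · exact hK0
      · exact le_rfl
  · rw [Finset.sum_ite_eq' _ 1 (fun _ => breg φ 1 (-1)),
      if_pos (Finset.mem_insert_of_mem (Finset.mem_insert_self 1 {N}))]

lemma trimDistor_mix_ge (hφ : φ = (fun x => x ^ 2) ∨ φ = fun x => Real.exp (-x))
    {p : ℝ} (hp0 : 0 < p) (hp : p ≤ 1 / 2) {P : Measure ℝ}
    (hP : P = ENNReal.ofReal (1 - p) • Measure.dirac (-1 : ℝ) +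
        ENNReal.ofReal p • Measure.dirac (1 : ℝ))
    {h γ : ℝ} (hh0 : 0 < h) (hh1 : h ≤ 1) (hγ : 1 - h < γ) (N : ℝ) (c : Fin 2 → ℝ) :
    min (h - (1 - γ)) h * bregCode φ N c ≤ trimDistor (Qmix P γ N) φ h c := by
  haveI := Qmix_fin hp0.le (by linarith) hP γ N
  refine trimDistor_ge_of _ h c _ ?_ ?_
  · exact exists_mem_subProbC _ φ c (measurable_bregCode_two hφ _)
      (fun x => bregCode_nonneg hφ x c) ({-1, 1, N} : Finset ℝ)
      ⟨-1, Finset.mem_insert_self _ _⟩ (Qmix_SC hP γ N) h hh0.le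
      (Qmix_univ_ge hp0.le (by linarith) hP γ N h hh1)
  · intro Pt hPt
    obtain ⟨Q, hQle, hQu, hQz, hval⟩ := subProb_repr _ φ c
      (measurable_bregCode_two hφ _) ({-1, 1, N} : Finset ℝ) (Qmix_SC hP γ N) h hh0 Pt hPt.1
    rw [hval]
    haveI : IsFiniteMeasure Q := ⟨by rw [hQu]; exact ENNReal.ofReal_lt_top⟩
    have hQN : ENNReal.ofReal (min (h - (1 - γ)) h) ≤ Q {N} := by
      have hbase : ENNReal.ofReal h - ENNReal.ofReal (1 - γ) ≤ Q {N} :=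
        mass_lower Q _ (measurableSet_singleton _) _ _ hQu
          (le_trans (Measure.le_iff'.mp hQle _) (Qmix_N_compl hp0.le (by linarith) hP γ N))
      refine le_trans ?_ hbase
      rcases le_or_gt 0 (1 - γ) with hc1 | hc1
      · rw [← ENNReal.ofReal_sub _ hc1]
        exact ENNReal.ofReal_le_ofReal (min_le_left _ _)
      · rw [ENNReal.ofReal_eq_zero.mpr hc1.le, tsub_zero]
        exact ENNReal.ofReal_le_ofReal (min_le_right _ _)
    have hQN' : min (h - (1 - γ)) h ≤ (Q {N}).toReal :=
      (ENNReal.ofReal_le_iff_le_toReal (measure_ne_top Q _)).mp hQN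
    have hterm : min (h - (1 - γ)) h * bregCode φ N c ≤ (Q {N}).toReal * bregCode φ N c :=
      mul_le_mul_of_nonneg_right hQN' (bregCode_nonneg hφ _ _)
    refine le_trans hterm ?_
    refine Finset.single_le_sum (f := fun a => (Q {a}).toReal * bregCode φ a c) ?_ ?_
    · intro a ha
      exact mul_nonneg ENNReal.toReal_nonneg (bregCode_nonneg hφ _ _)
    · exact Finset.mem_insert_of_mem (Finset.mem_insert_of_mem (Finset.mem_singleton_self N))

lemma trimDistor_opt_pairN (hφ : φ = (fun x => x ^ 2) ∨ φ = fun x => Real.exp (-x))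
    {p : ℝ} (hp0 : 0 < p) (hp : p ≤ 1 / 2) {P : Measure ℝ}
    (hP : P = ENNReal.ofReal (1 - p) • Measure.dirac (-1 : ℝ) +
        ENNReal.ofReal p • Measure.dirac (1 : ℝ))
    {h : ℝ} (hh1 : 1 - p < h) (hh2 : h < 1) (N : ℝ) :
    trimDistor (Qmix P ((h + p - 1) / p) N) φ h ![(-1 : ℝ), N] ≤ 0 := by
  set γ := (h + p - 1) / p with hγdef
  have hγ0 : 0 ≤ γ := div_nonneg (by linarith) hp0.le
  have hγ1 : γ ≤ 1 := by rw [div_le_one hp0]; linarith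
  have hkey : (1 - γ) * (1 - p) + γ = h := by
    rw [hγdef]
    field_simp
    ring
  haveI := Qmix_fin hp0.le (by linarith) hP γ N
  have hh0 : 0 < h := by linarith
  set c : Fin 2 → ℝ := ![(-1 : ℝ), N] with hc
  have hT0 : trimRadius (Qmix P γ N) φ h c = 0 := by
    refine trimRadius_zero _ φ h c ?_ ?_
    · rw [bBall_zero_empty φ c (fun x => bregCode_nonneg hφ x c)]
      simp
    · refine le_trans ?_ (measure_mono (?_ : ({-1, N} : Set ℝ) ⊆ bBallc φ c 0))
      · rw [← hkey]
        exact Qmix_pair_ge hp0.le (by linarith) hP hγ0 hγ1 N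
      · intro x hx
        rcases hx with rfl | hx
        · show bregCode φ (-1) c ≤ (0:ℝ) ^ 2
          rw [hc, bregCode_pair_left hφ]; norm_num
        · rw [Set.mem_singleton_iff] at hx; subst hx
          show bregCode φ x c ≤ (0:ℝ) ^ 2
          rw [hc, bregCode_pair_right hφ]; norm_num
  refine trimDistor_le_of hφ _ h hh0.le c 0 le_rfl ?_
  intro Pt hPt
  obtain ⟨Q, hQle, hQu, hQz, hval⟩ := subProb_repr _ φ c
    (measurable_bregCode_two hφ _) ({-1, 1, N} : Finset ℝ) (Qmix_SC hP γ N) h hh0 Pt hPt.1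
  rw [hval]
  have hsupp := hPt.2.2
  rw [hT0] at hsupp
  refine le_of_eq (Finset.sum_eq_zero ?_)
  intro a ha
  rcases Finset.mem_insert.mp ha with rfl | ha2
  · rw [hc, bregCode_pair_left hφ, mul_zero]
  rcases Finset.mem_insert.mp ha2 with rfl | ha3
  · by_cases hN1 : N = 1
    · subst hN1
      rw [hc, bregCode_pair_right hφ, mul_zero]
    · have hone : ({(1:ℝ)} : Set ℝ) ⊆ (bBallc φ c 0)ᶜ := by
        intro x hx
        rw [Set.mem_singleton_iff] at hx; subst hx
        simp only [Set.mem_compl_iff, bBallc, Set.mem_setOf_eq, not_le]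
        rw [hc, bregCode_two]
        simp only [Matrix.cons_val_zero, Matrix.cons_val_one, Matrix.head_cons]
        calc (0:ℝ) ^ 2 = 0 := by norm_num
        _ < _ := lt_min (breg_pos hφ (by norm_num)) (breg_pos hφ (fun hc' => hN1 hc'.symm))
      have hQ1 : Q {(1:ℝ)} = 0 := hQz _ (measure_mono_null hone hsupp)
      rw [hQ1]
      simp
  · rw [Finset.mem_singleton] at ha3; subst ha3
    rw [hc, bregCode_pair_right hφ, mul_zero]


theorem stmt_11 (φ : ℝ → ℝ)
    (hφ : φ = (fun x => x ^ 2) ∨ φ = fun x => Real.exp (-x))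
    (p : ℝ) (hp0 : 0 < p) (hp : p ≤ 1 / 2)
    (P : Measure ℝ)
    (hP : P = ENNReal.ofReal (1 - p) • Measure.dirac (-1 : ℝ) +
        ENNReal.ofReal p • Measure.dirac (1 : ℝ))
    (h : ℝ) (hh1 : 1 - p < h) (hh2 : h < 1) :
    discern P φ Set.univ h 2 = min ((h + p - 1) / p) (1 - h) ∧
    (1 < (1 + p) * h →
      discern P φ Set.univ h 2 = 1 - h ∧
      ∀ γ : ℝ, 1 - h < γ →
        ∀ cb : ℝ → Fin 2 → ℝ,
          (∀ N : ℝ, ∀ c' : Fin 2 → ℝ,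
            trimDistor (Qmix P γ N) φ h (cb N) ≤ trimDistor (Qmix P γ N) φ h c') →
          Tendsto (fun N => ⨆ j, ‖cb N j‖) atTop atTop) ∧
    ((1 + p) * h ≤ 1 →
      discern P φ Set.univ h 2 = (h + p - 1) / p ∧
      ∀ N : ℝ, ∀ c' : Fin 2 → ℝ,
        trimDistor (Qmix P ((h + p - 1) / p) N) φ h ![(-1 : ℝ), N] ≤
          trimDistor (Qmix P ((h + p - 1) / p) N) φ h c') := by
  have hp1 : p ≤ 1 := by linarith
  have hhalf : 1/2 < h := by linarith
  have h1h0 : 0 < 1 - h := by linarith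
  have hh0 : 0 < h := by linarith
  obtain ⟨m, hm0, hm⟩ := exists_m hφ
  have hβ0 : 0 < (h + p - 1) / p := div_pos (by linarith) hp0
  have hmin : min h (1 - h) = 1 - h := min_eq_right (by linarith)
  have hM0 : 0 < min ((h + p - 1) / p) (1 - h) := lt_min hβ0 h1h0
  have Dub : ∀ b ∈ {b : ℝ | 0 ≤ b ∧ b ≤ min h (1 - h) ∧
      ∀ j, 2 ≤ j → j ≤ 2 → 0 < optTrim P φ Set.univ ((h - b) / (1 - b)) (j - 1) -
        optTrim P φ Set.univ (h / (1 - b)) j}, b ≤ min ((h + p - 1) / p) (1 - h) := by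
    rintro b ⟨hb0, hble, hcond⟩
    have hb1h : b ≤ 1 - h := hble.trans (min_le_right _ _)
    refine le_min ?_ hb1h
    by_contra hc
    push_neg at hc
    have hden : 0 < 1 - b := by linarith
    have hnum : 0 < h - b := by linarith
    have hqpos : 0 < (h - b) / (1 - b) := div_pos hnum hden
    have hc2 : h + p - 1 < b * p := (div_lt_iff₀ hp0).mp hc
    have hle1p : (h - b) / (1 - b) ≤ 1 - p := by
      rw [div_le_iff₀ hden]
      nlinarith
    have c1 : optTrim P φ Set.univ ((h - b) / (1 - b)) 1 ≤ 0 :=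
      (optTrim_le hφ P _ hqpos.le ![(-1:ℝ)]).trans
        (trimDistor_single_zero hφ hp0 hp hP _ hqpos hle1p)
    have c2 : 0 ≤ optTrim P φ Set.univ (h / (1 - b)) 2 :=
      optTrim_nonneg hφ P _ (by positivity) 2
    have hj := hcond 2 le_rfl le_rfl
    have hj1 : optTrim P φ Set.univ ((h - b) / (1 - b)) 1 =
        optTrim P φ Set.univ ((h - b) / (1 - b)) (2 - 1) := rfl
    linarith [hj1 ▸ hj]
  have Dlb : ∀ b : ℝ, 0 ≤ b → b < min ((h + p - 1) / p) (1 - h) →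
      b ∈ {b : ℝ | 0 ≤ b ∧ b ≤ min h (1 - h) ∧
      ∀ j, 2 ≤ j → j ≤ 2 → 0 < optTrim P φ Set.univ ((h - b) / (1 - b)) (j - 1) -
        optTrim P φ Set.univ (h / (1 - b)) j} := by
    intro b hb0 hbM
    have hbβ : b < (h + p - 1) / p := hbM.trans_le (min_le_left _ _)
    have hb1h : b < 1 - h := lt_of_lt_of_le hbM (min_le_right _ _)
    have hden : 0 < 1 - b := by linarith
    refine ⟨hb0, by rw [hmin]; linarith, ?_⟩
    intro j hj2 hjk
    have hj : j = 2 := le_antisymm hjk hj2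
    subst hj
    show 0 < optTrim P φ Set.univ ((h - b) / (1 - b)) 1 -
        optTrim P φ Set.univ (h / (1 - b)) 2
    have hc2 : b * p < h + p - 1 := (lt_div_iff₀ hp0).mp hbβ
    have hgt : 1 - p < (h - b) / (1 - b) := by
      rw [lt_div_iff₀ hden]
      nlinarith
    have hle1 : (h - b) / (1 - b) ≤ 1 := by rw [div_le_one hden]; linarith
    have c1 := optTrim_single_pos hφ hp0 hp hP _ hgt hle1 m hm0 hm
    have hq2 : 0 < h / (1 - b) := by positivity
    have c2 : optTrim P φ Set.univ (h / (1 - b)) 2 ≤ 0 :=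
      (optTrim_le hφ P _ hq2.le ![(-1:ℝ), 1]).trans (trimDistor_pair_zero hφ hp0 hp hP _ hq2)
    have hεm : 0 < ((h - b) / (1 - b) - (1 - p)) * m := mul_pos (by linarith) hm0
    linarith
  have hdisc : discern P φ Set.univ h 2 = min ((h + p - 1) / p) (1 - h) := by
    rw [discern]
    apply le_antisymm
    · exact csSup_le ⟨0, Dlb 0 le_rfl hM0⟩ Dub
    · refine le_of_forall_lt fun x hx => ?_
      rcases lt_or_ge x 0 with hx0 | hx0
      · exact lt_of_lt_of_le hx0
          (le_csSup ⟨min ((h + p - 1) / p) (1 - h), Dub⟩ (Dlb 0 le_rfl hM0))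
      · refine lt_of_lt_of_le (?_ : x < (x + min ((h + p - 1) / p) (1 - h)) / 2)
          (le_csSup ⟨min ((h + p - 1) / p) (1 - h), Dub⟩ (Dlb _ (by linarith) (by linarith)))
        linarith
  refine ⟨hdisc, ?_, ?_⟩
  · intro h1p
    constructor
    · rw [hdisc]
      refine min_eq_right ?_
      rw [le_div_iff₀ hp0]
      nlinarith
    · intro γ hγ cb Hopt
      rw [tendsto_atTop]
      intro R
      have hε0 : 0 < min (h - (1 - γ)) h := lt_min (by linarith) hh0
      have hK00 : 0 ≤ breg φ 1 (-1) := breg_nonneg hφ _ _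
      have hR'0 : (0:ℝ) ≤ max R 0 := le_max_right _ _
      filter_upwards [eventually_ge_atTop
        (max R 0 + 2 + breg φ 1 (-1) * Real.exp (max R 0) / min (h - (1 - γ)) h)] with N hN
      by_contra hcon
      push_neg at hcon
      have hjb : ∀ j, |cb N j| ≤ max R 0 := by
        intro j
        have h1 : ‖cb N j‖ ≤ ⨆ i, ‖cb N i‖ :=
          le_ciSup (f := fun i => ‖cb N i‖) (Set.finite_range _).bddAbove j
        have h2 : ‖cb N j‖ < R := lt_of_le_of_lt h1 hcon
        rw [Real.norm_eq_abs] at h2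
        exact h2.le.trans (le_max_left _ _)
      have hNR : max R 0 + 1 ≤ N := by
        have hpos : 0 ≤ breg φ 1 (-1) * Real.exp (max R 0) / min (h - (1 - γ)) h := by
          positivity
        linarith
      have hflow : Real.exp (-(max R 0)) * (N - max R 0 - 1) ≤ bregCode φ N (cb N) := by
        rw [bregCode_two]
        exact le_min (breg_far hφ hR'0 (hjb 0) hNR) (breg_far hφ hR'0 (hjb 1) hNR)
      have low := trimDistor_mix_ge hφ hp0 hp hP hh0 hh2.le hγ N (cb N)
      have up := trimDistor_mixpair_le hφ hp0 hp hP hh0 hh2.le γ N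
      have hopt := Hopt N ![(-1:ℝ), N]
      have hfinal : min (h - (1 - γ)) h * bregCode φ N (cb N) ≤ breg φ 1 (-1) :=
        le_trans low (le_trans hopt up)
      have he : Real.exp (-(max R 0)) * Real.exp (max R 0) = 1 := by
        rw [← Real.exp_add]; simp
      have hεE : 0 < min (h - (1 - γ)) h * Real.exp (-(max R 0)) :=
        mul_pos hε0 (Real.exp_pos _)
      have hchain : min (h - (1 - γ)) h * (Real.exp (-(max R 0)) * (N - max R 0 - 1))
          ≤ min (h - (1 - γ)) h * bregCode φ N (cb N) :=
        mul_le_mul_of_nonneg_left hflow hε0.le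
      have hD : breg φ 1 (-1) * Real.exp (max R 0) / min (h - (1 - γ)) h * min (h - (1 - γ)) h
          = breg φ 1 (-1) * Real.exp (max R 0) :=
        div_mul_cancel₀ _ (ne_of_gt hε0)
      have step1 : (min (h - (1 - γ)) h * Real.exp (-(max R 0))) *
          (1 + breg φ 1 (-1) * Real.exp (max R 0) / min (h - (1 - γ)) h)
          ≤ min (h - (1 - γ)) h * (Real.exp (-(max R 0)) * (N - max R 0 - 1)) := by
        have h1 : 1 + breg φ 1 (-1) * Real.exp (max R 0) / min (h - (1 - γ)) h
            ≤ N - max R 0 - 1 := by linarith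
        calc (min (h - (1 - γ)) h * Real.exp (-(max R 0))) *
            (1 + breg φ 1 (-1) * Real.exp (max R 0) / min (h - (1 - γ)) h)
            ≤ (min (h - (1 - γ)) h * Real.exp (-(max R 0))) * (N - max R 0 - 1) :=
              mul_le_mul_of_nonneg_left h1 hεE.le
        _ = min (h - (1 - γ)) h * (Real.exp (-(max R 0)) * (N - max R 0 - 1)) := by ring
      have step2 : (min (h - (1 - γ)) h * Real.exp (-(max R 0))) *
          (1 + breg φ 1 (-1) * Real.exp (max R 0) / min (h - (1 - γ)) h)
          = min (h - (1 - γ)) h * Real.exp (-(max R 0)) +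
            Real.exp (-(max R 0)) *
              (breg φ 1 (-1) * Real.exp (max R 0) / min (h - (1 - γ)) h *
                min (h - (1 - γ)) h) := by
        ring
      rw [hD] at step2
      have step3 : Real.exp (-(max R 0)) * (breg φ 1 (-1) * Real.exp (max R 0))
          = breg φ 1 (-1) := by linear_combination breg φ 1 (-1) * he
      rw [step3] at step2
      linarith
  · intro hle
    constructor
    · rw [hdisc]
      refine min_eq_left ?_
      rw [div_le_iff₀ hp0]
      nlinarith
    · intro N c'
      refine le_trans (trimDistor_opt_pairN hφ hp0 hp hP hh1 hh2 N) ?_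
      exact trimDistor_nonneg hφ _ h hh0.le c'

end
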